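/- Let H₀, H₁, H₂ be complex Hilbert spaces, and let S : H₀ → H₁ and T : H₁ → H₂ be densely defined closed operators such that Range(S) ⊆ Ker(T), and assume Range(S) and Range(T) are closed. Then H₁ decomposes as the orthogonal direct sum H₁ = (Ker T ∩ Ker S*) ⊕ Range(S) ⊕ Range(T*). -/

import Mathlib

open scoped InnerProductSpace

/-- The range of a partially defined linear operator, as a submodule of the codomain. -/
noncomputable def pRange {𝕜 E F : Type*} [RCLike 𝕜]
    [NormedAddCommGroup E] [InnerProductSpace 𝕜 E]
    [NormedAddCommGroup F] [InnerProductSpace 𝕜 F]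
    (T : E →ₗ.[𝕜] F) : Submodule 𝕜 F :=
  LinearMap.range T.toFun

/-- The kernel of a partially defined linear operator, as a submodule of the domain space. -/
noncomputable def pKer {𝕜 E F : Type*} [RCLike 𝕜]
    [NormedAddCommGroup E] [InnerProductSpace 𝕜 E]
    [NormedAddCommGroup F] [InnerProductSpace 𝕜 F]
    (T : E →ₗ.[𝕜] F) : Submodule 𝕜 E :=
  (LinearMap.ker T.toFun).map T.domain.subtype

section Helpers

open LinearPMap

variable {E F : Type*}
  [NormedAddCommGroup E] [InnerProductSpace ℂ E] [CompleteSpace E]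
  [NormedAddCommGroup F] [InnerProductSpace ℂ F] [CompleteSpace F]
  {T : E →ₗ.[ℂ] F}

lemma mem_pKer_iff {x : E} : x ∈ pKer T ↔ ∃ hx : x ∈ T.domain, T ⟨x, hx⟩ = 0 := by
  constructor
  · rintro ⟨y, hy, rfl⟩
    exact ⟨y.2, hy⟩
  · rintro ⟨hx, h⟩
    exact ⟨⟨x, hx⟩, h, rfl⟩

lemma mem_pRange_iff {y : F} : y ∈ pRange T ↔ ∃ x : T.domain, T x = y := Iff.rfl

/-- The kernel of a closed operator is closed. -/
lemma pKer_isClosed (hTc : IsClosed (T.graph : Set (E × F))) :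
    IsClosed ((pKer T : Submodule ℂ E) : Set E) := by
  have : ((pKer T : Submodule ℂ E) : Set E) = (fun x : E => (x, (0 : F))) ⁻¹' (T.graph : Set (E × F)) := by
    ext x
    simp only [Set.mem_preimage, SetLike.mem_coe, LinearPMap.mem_graph_iff]
    rw [mem_pKer_iff]
    constructor
    · rintro ⟨hx, h⟩; exact ⟨⟨x, hx⟩, rfl, h⟩
    · rintro ⟨y, h1, h2⟩
      subst h1
      exact ⟨y.2, h2⟩
  rw [this]
  exact hTc.preimage (Continuous.prodMk_left 0)

/-- Elements of the kernel of the adjoint are orthogonal to the range. -/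
lemma pKer_adjoint_orth (hT : Dense (T.domain : Set E)) {a : F} {b : F}
    (ha : a ∈ pKer T.adjoint) (hb : b ∈ pRange T) : ⟪a, b⟫_ℂ = 0 := by
  obtain ⟨ha', ha0⟩ := mem_pKer_iff.mp ha
  obtain ⟨x, rfl⟩ := hb
  have := adjoint_isFormalAdjoint hT ⟨a, ha'⟩ x
  rw [ha0] at this
  simpa using this.symm

/-- Elements of the range of the adjoint are orthogonal to the kernel. -/
lemma pRange_adjoint_orth (hT : Dense (T.domain : Set E)) {a : E} {c : E}
    (ha : a ∈ pKer T) (hc : c ∈ pRange T.adjoint) : ⟪a, c⟫_ℂ = 0 := by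
  obtain ⟨ha', ha0⟩ := mem_pKer_iff.mp ha
  obtain ⟨w, hw⟩ := hc
  have h := adjoint_isFormalAdjoint hT w ⟨a, ha'⟩
  rw [ha0, inner_zero_right] at h
  have h2 : ⟪a, (T.adjoint w : E)⟫_ℂ = 0 := by rw [← inner_conj_symm, h]; simp
  rw [← hw]; exact h2

/-- An element orthogonal to the range lies in the kernel of the adjoint. -/
lemma mem_pKer_adjoint_of_orth (hT : Dense (T.domain : Set E)) {v : F}
    (hv : ∀ x : T.domain, ⟪v, T x⟫_ℂ = 0) : v ∈ pKer T.adjoint := by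
  have hvd : v ∈ T.adjoint.domain :=
    mem_adjoint_domain_of_exists v ⟨0, fun x => by rw [hv x, inner_zero_left]⟩
  refine mem_pKer_iff.mpr ⟨hvd, ?_⟩
  exact adjoint_apply_eq hT ⟨v, hvd⟩ (fun x => by rw [hv x, inner_zero_left])

/-- Closed range theorem direction: an element orthogonal to the kernel of a densely
defined closed operator with closed range lies in the range of the adjoint. -/
lemma mem_pRange_adjoint_of_orth (hT : Dense (T.domain : Set E))
    (hTc : IsClosed (T.graph : Set (E × F)))
    (hTr : IsClosed ((pRange T : Submodule ℂ F) : Set F)) {v : E}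
    (hv : ∀ x ∈ pKer T, ⟪x, v⟫_ℂ = 0) : v ∈ pRange T.adjoint := by
  haveI : CompleteSpace T.graph := hTc.completeSpace_coe
  haveI : CompleteSpace (pRange T) := hTr.completeSpace_coe
  -- the projection from the graph onto the range
  let π : T.graph →ₗ[ℂ] pRange T :=
    { toFun := fun z => ⟨(z : E × F).2, by
        obtain ⟨y, _, hy2⟩ := T.mem_graph_iff.mp z.2
        exact ⟨y, hy2⟩⟩
      map_add' := fun a b => rfl
      map_smul' := fun r a => rfl }
  have hπ : ∀ z : T.graph, (π z : F) = (z : E × F).2 := fun z => rfl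
  let πc : T.graph →L[ℂ] pRange T :=
    π.mkContinuous 1 (fun z => by
      rw [one_mul]
      calc ‖π z‖ = ‖(z : E × F).2‖ := rfl
        _ ≤ ‖(z : E × F)‖ := norm_snd_le _
        _ = ‖z‖ := rfl)
  have hsurj : Function.Surjective πc := by
    rintro ⟨y, x, hx⟩
    exact ⟨⟨(↑x, y), by rw [← hx]; exact T.mem_graph x⟩, Subtype.ext rfl⟩
  obtain ⟨C, hC0, hC⟩ := πc.exists_preimage_norm_le hsurj
  -- the functional on the graph
  let g : T.graph →ₗ[ℂ] ℂ :=
    { toFun := fun z => ⟪v, (z : E × F).1⟫_ℂ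
      map_add' := fun a b => by simp [inner_add_right]
      map_smul' := fun r a => by simp [inner_smul_right]
       }
  have hg : ∀ z : T.graph, g z = ⟪v, (z : E × F).1⟫_ℂ := fun z => rfl
  have hle : LinearMap.ker (πc : T.graph →ₗ[ℂ] pRange T) ≤ LinearMap.ker g := by
    intro z hz
    rw [LinearMap.mem_ker] at hz ⊢
    have h2 : ((z : E × F).2) = 0 := congrArg Subtype.val hz
    have hk : (z : E × F).1 ∈ pKer T := by
      obtain ⟨y, hy1, hy2⟩ := T.mem_graph_iff.mp z.2
      rw [← hy1]
      exact mem_pKer_iff.mpr ⟨y.2, by rw [Subtype.coe_eta, hy2, h2]⟩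
    rw [hg, ← inner_conj_symm, hv _ hk]; simp
  -- descend to a functional on the range
  let e := (πc : T.graph →ₗ[ℂ] pRange T).quotKerEquivOfSurjective hsurj
  let gbar := (LinearMap.ker (πc : T.graph →ₗ[ℂ] pRange T)).liftQ g hle
  let f : pRange T →ₗ[ℂ] ℂ := gbar.comp (e.symm : pRange T →ₗ[ℂ] _)
  have hfπ : ∀ z : T.graph, f (πc z) = g z := by
    intro z
    have he : e (Submodule.Quotient.mk z) = πc z := by
      simp [e, LinearMap.quotKerEquivOfSurjective, LinearMap.quotKerEquivRange]
    have : e.symm (πc z) = Submodule.Quotient.mk z := by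
      rw [← he, LinearEquiv.symm_apply_apply]
    show gbar (e.symm (πc z)) = g z
    rw [this]
    rfl
  have hbound : ∀ r : pRange T, ‖f r‖ ≤ (C * ‖v‖) * ‖r‖ := by
    intro r
    obtain ⟨z, hz, hznorm⟩ := hC r
    have hfr : f r = g z := by rw [← hz, hfπ]
    rw [hfr, hg]
    calc ‖⟪v, (z : E × F).1⟫_ℂ‖ ≤ ‖v‖ * ‖(z : E × F).1‖ := norm_inner_le_norm _ _
      _ ≤ ‖v‖ * ‖(z : E × F)‖ := mul_le_mul_of_nonneg_left (norm_fst_le _) (norm_nonneg v)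
      _ = ‖v‖ * ‖z‖ := rfl
      _ ≤ ‖v‖ * (C * ‖r‖) := mul_le_mul_of_nonneg_left hznorm (norm_nonneg v)
      _ = (C * ‖v‖) * ‖r‖ := by ring
  let fc : pRange T →L[ℂ] ℂ := f.mkContinuous (C * ‖v‖) hbound
  let φ : F →L[ℂ] ℂ := fc.comp (Submodule.orthogonalProjectionOnto (pRange T) : F →L[ℂ] pRange T)
  let w : F := (InnerProductSpace.toDual ℂ F).symm φ
  have hw : ∀ x : T.domain, ⟪w, T x⟫_ℂ = ⟪v, (x : E)⟫_ℂ := by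
    intro x
    have h1 : ⟪w, T x⟫_ℂ = φ (T x) := InnerProductSpace.toDual_symm_apply
    rw [h1]
    have hTx : T x ∈ pRange T := ⟨x, rfl⟩
    have h2 : Submodule.orthogonalProjectionOnto (pRange T) (T x) = ⟨T x, hTx⟩ :=
      Submodule.orthogonalProjectionOnto_mem_subspace_eq_self (⟨T x, hTx⟩ : pRange T)
    show fc (Submodule.orthogonalProjectionOnto (pRange T) (T x)) = _
    rw [h2]
    have h3 : πc ⟨((x : E), T x), T.mem_graph x⟩ = ⟨T x, hTx⟩ := Subtype.ext rfl
    have h4 : fc (⟨T x, hTx⟩ : pRange T) = f (⟨T x, hTx⟩ : pRange T) := rfl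
    rw [h4, ← h3, hfπ]
    rfl
  have hmem : w ∈ T.adjoint.domain := mem_adjoint_domain_of_exists w ⟨v, fun x => (hw x).symm⟩
  exact ⟨⟨w, hmem⟩, adjoint_apply_eq hT ⟨w, hmem⟩ (fun x => (hw x).symm)⟩

end Helpers

/-- Abstract Hodge–Kodaira decomposition: for a Hilbert complex
`H₀ --S--> H₁ --T--> H₂` of densely defined closed operators with closed ranges,
`H₁` is the orthogonal direct sum of the harmonic space `Ker T ∩ Ker S*`,
`Range S`, and `Range T*`. -/
theorem stmt6 {H₀ H₁ H₂ : Type*}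
    [NormedAddCommGroup H₀] [InnerProductSpace ℂ H₀] [CompleteSpace H₀]
    [NormedAddCommGroup H₁] [InnerProductSpace ℂ H₁] [CompleteSpace H₁]
    [NormedAddCommGroup H₂] [InnerProductSpace ℂ H₂] [CompleteSpace H₂]
    (S : H₀ →ₗ.[ℂ] H₁) (T : H₁ →ₗ.[ℂ] H₂)
    (hSdense : Dense (S.domain : Set H₀)) (hTdense : Dense (T.domain : Set H₁))
    (hSclosed : IsClosed (S.graph : Set (H₀ × H₁)))
    (hTclosed : IsClosed (T.graph : Set (H₁ × H₂)))
    (hST : pRange S ≤ pKer T)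
    (hSrange : IsClosed ((pRange S : Submodule ℂ H₁) : Set H₁))
    (hTrange : IsClosed ((pRange T : Submodule ℂ H₂) : Set H₂)) :
    -- the three pieces are pairwise orthogonal:
    (∀ a ∈ pKer T ⊓ pKer S.adjoint, ∀ b ∈ pRange S, ⟪a, b⟫_ℂ = 0) ∧
    (∀ a ∈ pKer T ⊓ pKer S.adjoint, ∀ c ∈ pRange T.adjoint, ⟪a, c⟫_ℂ = 0) ∧
    (∀ b ∈ pRange S, ∀ c ∈ pRange T.adjoint, ⟪b, c⟫_ℂ = 0) ∧
    -- and every element of `H₁` decomposes uniquely as a sum of such pieces: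
    (∀ v : H₁, ∃ a ∈ pKer T ⊓ pKer S.adjoint, ∃ b ∈ pRange S, ∃ c ∈ pRange T.adjoint,
      v = a + b + c ∧
      ∀ a' ∈ pKer T ⊓ pKer S.adjoint, ∀ b' ∈ pRange S, ∀ c' ∈ pRange T.adjoint,
        v = a' + b' + c' → a' = a ∧ b' = b ∧ c' = c) := by
  have orth1 : ∀ a ∈ pKer T ⊓ pKer S.adjoint, ∀ b ∈ pRange S, ⟪a, b⟫_ℂ = 0 :=
    fun a ha b hb => pKer_adjoint_orth hSdense ha.2 hb
  have orth2 : ∀ a ∈ pKer T ⊓ pKer S.adjoint, ∀ c ∈ pRange T.adjoint, ⟪a, c⟫_ℂ = 0 :=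
    fun a ha c hc => pRange_adjoint_orth hTdense ha.1 hc
  have orth3 : ∀ b ∈ pRange S, ∀ c ∈ pRange T.adjoint, ⟪b, c⟫_ℂ = 0 :=
    fun b hb c hc => pRange_adjoint_orth hTdense (hST hb) hc
  refine ⟨orth1, orth2, orth3, fun v => ?_⟩
  -- first split off the range of the adjoint of T
  haveI : CompleteSpace (pKer T) := (pKer_isClosed hTclosed).completeSpace_coe
  haveI : CompleteSpace (pRange S) := hSrange.completeSpace_coe
  obtain ⟨k, hk, c, hcperp, hv⟩ := (pKer T).exists_add_mem_mem_orthogonal v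
  have hc : c ∈ pRange T.adjoint :=
    mem_pRange_adjoint_of_orth hTdense hTclosed hTrange
      (fun x hx => (Submodule.mem_orthogonal _ _).mp hcperp x hx)
  -- then split the kernel part
  obtain ⟨b, hb, a, haperp, hk'⟩ := (pRange S).exists_add_mem_mem_orthogonal k
  have haK : a ∈ pKer T := by
    have : a = k - b := by rw [hk']; abel
    rw [this]
    exact Submodule.sub_mem _ hk (hST hb)
  have haS : a ∈ pKer S.adjoint := by
    apply mem_pKer_adjoint_of_orth hSdense
    intro x
    have h0 : ⟪(S x : H₁), a⟫_ℂ = 0 := (Submodule.mem_orthogonal _ _).mp haperp _ ⟨x, rfl⟩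
    rw [← inner_conj_symm, h0]; simp
  have ha : a ∈ pKer T ⊓ pKer S.adjoint := ⟨haK, haS⟩
  have hveq : v = a + b + c := by rw [hv, hk']; abel
  refine ⟨a, ha, b, hb, c, hc, hveq, ?_⟩
  -- uniqueness
  intro a' ha' b' hb' c' hc' hv'
  have hsum : (a' - a) + (b' - b) + (c' - c) = 0 := by
    have h : a' + b' + c' = a + b + c := hv'.symm.trans hveq
    calc (a' - a) + (b' - b) + (c' - c) = (a' + b' + c') - (a + b + c) := by abel
      _ = 0 := by rw [h, sub_self]
  have hda : a' - a ∈ pKer T ⊓ pKer S.adjoint := Submodule.sub_mem _ ha' ha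
  have hdb : b' - b ∈ pRange S := Submodule.sub_mem _ hb' hb
  have hdc : c' - c ∈ pRange T.adjoint := Submodule.sub_mem _ hc' hc
  have hA : a' - a = 0 := by
    have h1 : ⟪a' - a, (a' - a) + (b' - b) + (c' - c)⟫_ℂ = ⟪a' - a, a' - a⟫_ℂ := by
      rw [inner_add_right, inner_add_right, orth1 _ hda _ hdb, orth2 _ hda _ hdc,
        add_zero, add_zero]
    rw [hsum, inner_zero_right] at h1
    exact inner_self_eq_zero.mp h1.symm
  rw [hA, zero_add] at hsum
  have hB : b' - b = 0 := by
    have h1 : ⟪b' - b, (b' - b) + (c' - c)⟫_ℂ = ⟪b' - b, b' - b⟫_ℂ := by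
      rw [inner_add_right, orth3 _ hdb _ hdc, add_zero]
    rw [hsum, inner_zero_right] at h1
    exact inner_self_eq_zero.mp h1.symm
  rw [hB, zero_add] at hsum
  exact ⟨sub_eq_zero.mp hA, sub_eq_zero.mp hB, sub_eq_zero.mp hsum⟩
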